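/- Let X be self-adjoint on a finite-dimensional Hilbert space, φ a state, and K(t) = log φ(exp(tX)) the cumulant generating function (defined where φ(e^{tX}) ≠ 0). Then the second derivative satisfies 0 ≤ K''(t) ≤ 4‖X‖_op², and the third derivative satisfies |K'''(t)| ≤ 2‖X‖_op·K''(t). -/

import Mathlib

open scoped ComplexOrder

open Finset in
private lemma cumulant_aux {n : ℕ} (p L : Fin n → ℝ) (R : ℝ)
    (hp : ∀ i, 0 ≤ p i) (hL : ∀ i, |L i| ≤ R)
    (hS : ∀ u : ℝ, 0 < ∑ i, p i * Real.exp (u * L i)) (t : ℝ) :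
    (0 ≤ iteratedDeriv 2 (fun u : ℝ => Real.log (∑ i, p i * Real.exp (u * L i))) t ∧
      iteratedDeriv 2 (fun u : ℝ => Real.log (∑ i, p i * Real.exp (u * L i))) t ≤ 4 * R ^ 2) ∧
    |iteratedDeriv 3 (fun u : ℝ => Real.log (∑ i, p i * Real.exp (u * L i))) t|
      ≤ 2 * R * iteratedDeriv 2 (fun u : ℝ => Real.log (∑ i, p i * Real.exp (u * L i))) t := by
  set F : ℝ → ℝ := fun u => Real.log (∑ i, p i * Real.exp (u * L i)) with hF
  set S : ℕ → ℝ → ℝ := fun k u => ∑ i, p i * L i ^ k * Real.exp (u * L i) with hSdef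
  have hS0 : ∀ u, S 0 u = ∑ i, p i * Real.exp (u * L i) := by
    intro u; simp [hSdef]
  have hS0pos : ∀ u, 0 < S 0 u := fun u => (hS0 u).symm ▸ hS u
  have hderiv : ∀ (k : ℕ) (u : ℝ), HasDerivAt (S k) (S (k+1) u) u := by
    intro k u
    have h : ∀ i : Fin n, HasDerivAt (fun u : ℝ => p i * L i ^ k * Real.exp (u * L i))
        (p i * L i ^ (k+1) * Real.exp (u * L i)) u := by
      intro i
      have h := ((hasDerivAt_mul_const (x := u) (L i)).exp).const_mul (p i * L i ^ k)
      refine h.congr_deriv ?_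
      ring
    simpa [hSdef] using HasDerivAt.fun_sum (fun i (_ : i ∈ Finset.univ) => h i)
  -- first derivative
  have hK1 : deriv F = fun u => S 1 u / S 0 u := by
    funext u
    have h := (hderiv 0 u).log (hS0pos u).ne'
    have he : F = fun y => Real.log (S 0 y) := by
      funext y; rw [hS0]
    rw [he]
    exact h.deriv
  -- second derivative as a function
  have e2 : iteratedDeriv 2 F = fun u => (S 2 u * S 0 u - S 1 u ^ 2) / S 0 u ^ 2 := by
    have h21 : iteratedDeriv 2 F = deriv (deriv F) := by
      show iteratedDeriv (1 + 1) F = _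
      rw [iteratedDeriv_succ, iteratedDeriv_one]
    rw [h21, hK1]
    funext u
    have h := (hderiv 1 u).div (hderiv 0 u) (hS0pos u).ne'
    rw [show (fun u => S 1 u / S 0 u) = S 1 / S 0 from rfl, h.deriv]
    ring
  -- third derivative value at t
  have hden_ne : S 0 t ^ 2 ≠ 0 := pow_ne_zero _ (hS0pos t).ne'
  have e3 : iteratedDeriv 3 F t = ((S 3 t * S 0 t + S 2 t * S 1 t - 2 * S 1 t ^ 1 * S 2 t)
        * S 0 t ^ 2 - (S 2 t * S 0 t - S 1 t ^ 2) * (2 * S 0 t ^ 1 * S 1 t)) / (S 0 t ^ 2) ^ 2 := by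
    have h32 : iteratedDeriv 3 F = deriv (iteratedDeriv 2 F) := by
      show iteratedDeriv (2 + 1) F = _
      rw [iteratedDeriv_succ]
    rw [h32, e2]
    have hnum : HasDerivAt (fun u => S 2 u * S 0 u - S 1 u ^ 2)
        (S 3 t * S 0 t + S 2 t * S 1 t - 2 * S 1 t ^ 1 * S 2 t) t :=
      ((hderiv 2 t).mul (hderiv 0 t)).sub ((hderiv 1 t).pow 2)
    have hden : HasDerivAt (fun u => S 0 u ^ 2) (2 * S 0 t ^ 1 * S 1 t) t := (hderiv 0 t).pow 2
    exact (hnum.div hden hden_ne).deriv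
  -- tilted probability weights
  set a := S 0 t with hadef
  have ha : 0 < a := hS0pos t
  set q : Fin n → ℝ := fun i => p i * Real.exp (t * L i) / a with hq
  have hq0 : ∀ i, 0 ≤ q i := fun i => div_nonneg (mul_nonneg (hp i) (Real.exp_nonneg _)) ha.le
  have hqs : ∀ k : ℕ, ∑ i, q i * L i ^ k = S k t / a := by
    intro k
    have h : ∀ i ∈ Finset.univ (α := Fin n),
        q i * L i ^ k = (p i * L i ^ k * Real.exp (t * L i)) / a := by
      intro i _
      rw [hq]
      ring
    rw [Finset.sum_congr rfl h, ← Finset.sum_div]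
  have hq1 : ∑ i, q i = 1 := by
    have h := hqs 0
    simp only [pow_zero, mul_one] at h
    rw [h, ← hadef, div_self ha.ne']
  set μ := ∑ i, q i * L i with hμdef
  set m2 := ∑ i, q i * L i ^ 2 with hm2def
  set m3 := ∑ i, q i * L i ^ 3 with hm3def
  have hS1 : S 1 t = a * μ := by
    have h := hqs 1
    simp only [pow_one] at h
    rw [← hμdef] at h
    field_simp at h
    linarith [h]
  have hS2 : S 2 t = a * m2 := by
    have h := hqs 2
    rw [← hm2def] at h
    field_simp at h
    linarith [h]
  have hS3 : S 3 t = a * m3 := by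
    have h := hqs 3
    rw [← hm3def] at h
    field_simp at h
    linarith [h]
  -- closed forms
  have hK2 : iteratedDeriv 2 F t = m2 - μ ^ 2 := by
    rw [e2]
    simp only []
    rw [← hadef, hS1, hS2]
    field_simp
  have hK3 : iteratedDeriv 3 F t = m3 - 3 * μ * m2 + 2 * μ ^ 3 := by
    rw [e3, hS1, hS2, hS3]
    field_simp
    ring
  -- central moment identities
  have hV : m2 - μ ^ 2 = ∑ i, q i * (L i - μ) ^ 2 := by
    have h : ∀ i ∈ Finset.univ (α := Fin n),
        q i * (L i - μ) ^ 2 = q i * L i ^ 2 - 2 * μ * (q i * L i) + μ ^ 2 * q i := by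
      intro i _; ring
    rw [Finset.sum_congr rfl h, Finset.sum_add_distrib, Finset.sum_sub_distrib,
      ← Finset.mul_sum, ← Finset.mul_sum, hq1, ← hμdef, ← hm2def]
    ring
  have hT : m3 - 3 * μ * m2 + 2 * μ ^ 3 = ∑ i, q i * (L i - μ) ^ 3 := by
    have h : ∀ i ∈ Finset.univ (α := Fin n),
        q i * (L i - μ) ^ 3 = (q i * L i ^ 3 - 3 * μ * (q i * L i ^ 2))
          + (3 * μ ^ 2 * (q i * L i) - μ ^ 3 * q i) := by
      intro i _; ring
    rw [Finset.sum_congr rfl h, Finset.sum_add_distrib, Finset.sum_sub_distrib,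
      Finset.sum_sub_distrib, ← Finset.mul_sum, ← Finset.mul_sum, ← Finset.mul_sum,
      hq1, ← hμdef, ← hm2def, ← hm3def]
    ring
  -- bounds
  have hμabs : |μ| ≤ R := by
    calc |μ| ≤ ∑ i, |q i * L i| := Finset.abs_sum_le_sum_abs _ _
      _ ≤ ∑ i, q i * R := by
          refine Finset.sum_le_sum fun i _ => ?_
          rw [abs_mul, abs_of_nonneg (hq0 i)]
          exact mul_le_mul_of_nonneg_left (hL i) (hq0 i)
      _ = R := by rw [← Finset.sum_mul, hq1, one_mul]
  have hdev : ∀ i, |L i - μ| ≤ 2 * R := by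
    intro i
    have h1 : |L i - μ| ≤ |L i| + |μ| := by
      rw [sub_eq_add_neg]
      exact (abs_add_le _ _).trans (by rw [abs_neg])
    linarith [hL i]
  have hVpos : 0 ≤ ∑ i, q i * (L i - μ) ^ 2 :=
    Finset.sum_nonneg fun i _ => mul_nonneg (hq0 i) (sq_nonneg _)
  have hVle : ∑ i, q i * (L i - μ) ^ 2 ≤ 4 * R ^ 2 := by
    calc ∑ i, q i * (L i - μ) ^ 2 ≤ ∑ i, q i * (2 * R) ^ 2 := by
          refine Finset.sum_le_sum fun i _ => ?_
          refine mul_le_mul_of_nonneg_left ?_ (hq0 i)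
          rw [← sq_abs]
          exact pow_le_pow_left₀ (abs_nonneg _) (hdev i) 2
      _ = 4 * R ^ 2 := by rw [← Finset.sum_mul, hq1]; ring
  have hTle : |∑ i, q i * (L i - μ) ^ 3| ≤ 2 * R * ∑ i, q i * (L i - μ) ^ 2 := by
    calc |∑ i, q i * (L i - μ) ^ 3| ≤ ∑ i, |q i * (L i - μ) ^ 3| :=
          Finset.abs_sum_le_sum_abs _ _
      _ ≤ ∑ i, 2 * R * (q i * (L i - μ) ^ 2) := by
          refine Finset.sum_le_sum fun i _ => ?_
          rw [abs_mul, abs_of_nonneg (hq0 i), abs_pow]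
          have h1 : |L i - μ| ^ 3 = |L i - μ| * (L i - μ) ^ 2 := by
            rw [pow_succ', sq_abs]
          rw [h1]
          have h2 : (q i * (L i - μ) ^ 2) * |L i - μ| ≤ (q i * (L i - μ) ^ 2) * (2 * R) :=
            mul_le_mul_of_nonneg_left (hdev i) (mul_nonneg (hq0 i) (sq_nonneg _))
          nlinarith [h2]
      _ = 2 * R * ∑ i, q i * (L i - μ) ^ 2 := by rw [← Finset.mul_sum]
  refine ⟨⟨?_, ?_⟩, ?_⟩
  · rw [hK2, hV]; exact hVpos
  · rw [hK2, hV]; exact hVle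
  · rw [hK3, hK2, hT, hV]; exact hTle

private lemma exp_apply_eigen {H : Type*} [NormedAddCommGroup H] [InnerProductSpace ℂ H]
    [CompleteSpace H] (A : H →L[ℂ] H) {c : ℂ} {v : H} (h : A v = c • v) :
    NormedSpace.exp A v = Complex.exp c • v := by
  have hpow : ∀ k : ℕ, (A ^ k) v = c ^ k • v := by
    intro k
    induction k with
    | zero => simp
    | succ k ih =>
      rw [pow_succ, pow_succ, ContinuousLinearMap.mul_apply, h, map_smul, ih, smul_smul, mul_comm]
  have h1 : HasSum (fun k : ℕ => ((k.factorial : ℂ))⁻¹ • A ^ k) (NormedSpace.exp A) := by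
    rw [NormedSpace.exp_eq_tsum ℂ]
    exact (NormedSpace.expSeries_summable' A).hasSum
  have h2 := h1.mapL (ContinuousLinearMap.apply ℂ H v)
  have h3 : HasSum (fun k : ℕ => ((k.factorial : ℂ))⁻¹ * c ^ k) (Complex.exp c) := by
    rw [Complex.exp_eq_exp_ℂ, NormedSpace.exp_eq_tsum ℂ]
    simpa [smul_eq_mul] using (NormedSpace.expSeries_summable' (𝕂 := ℂ) c).hasSum
  have h4 := h3.smul_const v
  have he : ∀ k : ℕ, (ContinuousLinearMap.apply ℂ H v) (((k.factorial : ℂ))⁻¹ • A ^ k)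
      = (((k.factorial : ℂ))⁻¹ * c ^ k) • v := by
    intro k
    simp [hpow k, smul_smul]
  simp only [he] at h2
  exact h2.unique h4

/-- Bounds on the second and third derivatives of the cumulant generating function
`K(t) = log φ(exp (t X))` of a self-adjoint operator `X` with respect to a state `φ`:
`0 ≤ K''(t) ≤ 4‖X‖²` and `|K'''(t)| ≤ 2‖X‖ K''(t)`. -/
theorem cumulant_derivative_bounds
    {H : Type*} [NormedAddCommGroup H] [InnerProductSpace ℂ H] [FiniteDimensional ℂ H]
    (φ : (H →L[ℂ] H) →ₗ[ℂ] ℂ)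
    (hpos : ∀ A : H →L[ℂ] H, 0 ≤ φ (star A * A))
    (hnorm : φ 1 = 1)
    (X : H →L[ℂ] H) (hX : IsSelfAdjoint X)
    (hposexp : ∀ t : ℝ, (0 : ℂ) < φ (NormedSpace.exp ((t : ℂ) • X))) :
    ∀ t : ℝ,
      (0 ≤ iteratedDeriv 2
          (fun u : ℝ => Real.log ((φ (NormedSpace.exp ((u : ℂ) • X))).re)) t ∧
        iteratedDeriv 2
          (fun u : ℝ => Real.log ((φ (NormedSpace.exp ((u : ℂ) • X))).re)) t
          ≤ 4 * ‖X‖ ^ 2) ∧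
      |iteratedDeriv 3
          (fun u : ℝ => Real.log ((φ (NormedSpace.exp ((u : ℂ) • X))).re)) t|
        ≤ 2 * ‖X‖ *
          iteratedDeriv 2
            (fun u : ℝ => Real.log ((φ (NormedSpace.exp ((u : ℂ) • X))).re)) t := by
  intro t
  have hsym := hX.isSymmetric
  have hrank : Module.finrank ℂ H = Module.finrank ℂ H := rfl
  set N := Module.finrank ℂ H with hN
  let b : OrthonormalBasis (Fin N) ℂ H := hsym.eigenvectorBasis hrank
  let L : Fin N → ℝ := hsym.eigenvalues hrank
  have hXb : ∀ i, X (b i) = (L i : ℂ) • b i := fun i => hsym.apply_eigenvectorBasis hrank i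
  let P : Fin N → (H →L[ℂ] H) := fun i => (innerSL ℂ (b i)).smulRight (b i)
  have hPapply : ∀ i v, P i v = (inner ℂ (b i) v : ℂ) • b i := fun i v => rfl
  have hbb : ∀ i, (inner ℂ (b i) (b i) : ℂ) = 1 := by
    intro i
    simpa using orthonormal_iff_ite.mp b.orthonormal i i
  have hPsa : ∀ i, IsSelfAdjoint (P i) := by
    intro i
    rw [ContinuousLinearMap.isSelfAdjoint_iff']
    refine ((ContinuousLinearMap.eq_adjoint_iff (P i) (P i)).mpr fun x y => ?_).symm
    simp only [hPapply, inner_smul_left, inner_smul_right, inner_conj_symm]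
    ring
  have hPP : ∀ i, star (P i) * P i = P i := by
    intro i
    rw [(hPsa i).star_eq]
    ext v
    simp [ContinuousLinearMap.mul_apply, hPapply, inner_smul_right, hbb i, smul_smul]
  have hφP : ∀ i, 0 ≤ φ (P i) := by
    intro i
    have h := hpos (P i)
    rwa [hPP i] at h
  set p : Fin N → ℝ := fun i => (φ (P i)).re with hpdef
  have hp0 : ∀ i, 0 ≤ p i := by
    intro i
    have h := (Complex.le_def.mp (hφP i)).1
    simpa using h
  have hφPre : ∀ i, φ (P i) = (p i : ℂ) := by
    intro i
    have h := (Complex.le_def.mp (hφP i)).2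
    apply Complex.ext
    · simp [hpdef]
    · rw [Complex.ofReal_im, ← h, Complex.zero_im]
  have hexpb : ∀ (u : ℝ) (i : Fin N),
      NormedSpace.exp ((u : ℂ) • X) (b i) = Complex.exp ((u : ℂ) * L i) • b i := by
    intro u i
    apply exp_apply_eigen
    rw [ContinuousLinearMap.smul_apply, hXb i, smul_smul]
  have hkey : ∀ u : ℝ, φ (NormedSpace.exp ((u : ℂ) • X))
      = ∑ i, (p i : ℂ) * Complex.exp ((u : ℂ) * L i) := by
    intro u
    have hop : NormedSpace.exp ((u : ℂ) • X) = ∑ i, Complex.exp ((u : ℂ) * L i) • P i := by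
      apply ContinuousLinearMap.ext
      intro v
      conv_lhs => rw [← b.sum_repr v]
      rw [map_sum, ContinuousLinearMap.sum_apply]
      refine Finset.sum_congr rfl fun i _ => ?_
      rw [map_smul, hexpb u i, ContinuousLinearMap.smul_apply, hPapply,
        b.repr_apply_apply, smul_comm]
    rw [hop, map_sum]
    refine Finset.sum_congr rfl fun i _ => ?_
    rw [map_smul, hφPre i, smul_eq_mul, mul_comm]
  have hkeyre : ∀ u : ℝ, (φ (NormedSpace.exp ((u : ℂ) • X))).re
      = ∑ i, p i * Real.exp (u * L i) := by
    intro u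
    rw [hkey u, Complex.re_sum]
    refine Finset.sum_congr rfl fun i _ => ?_
    have h1 : ((u : ℂ) * (L i : ℂ)) = ((u * L i : ℝ) : ℂ) := by push_cast; ring
    rw [h1, ← Complex.ofReal_exp, ← Complex.ofReal_mul, Complex.ofReal_re]
  have hLb : ∀ i, |L i| ≤ ‖X‖ := by
    intro i
    have hb1 : ‖b i‖ = 1 := b.orthonormal.1 i
    have h1 := X.le_opNorm (b i)
    rw [hb1, mul_one, hXb i, norm_smul, hb1, mul_one, Complex.norm_real,
      Real.norm_eq_abs] at h1
    exact h1
  have hSpos : ∀ u : ℝ, 0 < ∑ i, p i * Real.exp (u * L i) := by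
    intro u
    have h := (Complex.lt_def.mp (hposexp u)).1
    rw [← hkeyre u]
    simpa using h
  have hfun : (fun u : ℝ => Real.log ((φ (NormedSpace.exp ((u : ℂ) • X))).re))
      = fun u : ℝ => Real.log (∑ i, p i * Real.exp (u * L i)) := by
    funext u
    rw [hkeyre u]
  rw [hfun]
  exact cumulant_aux p L ‖X‖ hp0 hLb hSpos t
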